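/- Let u ≠ 0, v ≠ 0, δ ∈ ℝ, and k₁, k₂ ∈ ℤ. The function φ(x,y,z) = exp( (i/u)(2πk₁ x + (k₂/v)(−δx + uy)) ) on ℝ³ is invariant under the three Heisenberg left translations by a₁ = (u,δ,0), a₂ = (0,2πv,0), a₃ = (0,0,2πuv), i.e. φ(a_j·(x,y,z)) = φ(x,y,z) for j = 1,2,3, where (a,b,c)·(x,y,z) = (a+x, b+y, c+z+ay). Moreover it satisfies χ₁φ = i(1/u)(2πk₁ − (δ/v)k₂)φ, χ₂φ = i(k₂/v)φ, χ₃φ = 0. -/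

import Mathlib

noncomputable def chi1 (f : ℝ × ℝ × ℝ → ℂ) (p : ℝ × ℝ × ℝ) : ℂ :=
  fderiv ℝ f p (1, 0, 0)

noncomputable def chi2 (f : ℝ × ℝ × ℝ → ℂ) (p : ℝ × ℝ × ℝ) : ℂ :=
  fderiv ℝ f p (0, 1, 0) + p.1 * fderiv ℝ f p (0, 0, 1)

noncomputable def chi3 (f : ℝ × ℝ × ℝ → ℂ) (p : ℝ × ℝ × ℝ) : ℂ :=
  fderiv ℝ f p (0, 0, 1)

/-- Heisenberg left action (a,b,c)·(x,y,z) = (a+x, b+y, c+z+ay). -/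
def heisAct (a b c : ℝ) (p : ℝ × ℝ × ℝ) : ℝ × ℝ × ℝ :=
  (a + p.1, b + p.2.1, c + p.2.2 + a * p.2.1)

noncomputable def expLin (A B : ℂ) : (ℝ × ℝ × ℝ) →L[ℝ] ℂ :=
  A • (Complex.ofRealCLM.comp (ContinuousLinearMap.fst ℝ ℝ (ℝ × ℝ))) +
  B • (Complex.ofRealCLM.comp ((ContinuousLinearMap.fst ℝ ℝ ℝ).comp
        (ContinuousLinearMap.snd ℝ ℝ (ℝ × ℝ))))

lemma expLin_apply (A B : ℂ) (w : ℝ × ℝ × ℝ) :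
    expLin A B w = A * w.1 + B * w.2.1 := by
  simp [expLin, smul_eq_mul]

lemma phi_fderiv (A B : ℂ) (p : ℝ × ℝ × ℝ) :
    fderiv ℝ (fun q : ℝ × ℝ × ℝ => Complex.exp (A * q.1 + B * q.2.1)) p =
      Complex.exp (A * p.1 + B * p.2.1) • expLin A B := by
  have h1 : HasFDerivAt (fun q : ℝ × ℝ × ℝ => A * (q.1 : ℂ) + B * q.2.1)
      (expLin A B) p := by
    have h0 : (fun q : ℝ × ℝ × ℝ => A * (q.1 : ℂ) + B * q.2.1) = ⇑(expLin A B) :=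
      funext fun q => (expLin_apply A B q).symm
    rw [h0]
    exact (expLin A B).hasFDerivAt
  exact (h1.cexp).fderiv

theorem U1_symmetric_modes (u v δ : ℝ) (hu : u ≠ 0) (hv : v ≠ 0) (k1 k2 : ℤ) :
    let φ : ℝ × ℝ × ℝ → ℂ := fun p =>
      Complex.exp ((Complex.I / (u : ℂ)) *
        (2 * Real.pi * k1 * p.1 + ((k2 : ℂ) / (v : ℂ)) * (-(δ : ℂ) * p.1 + (u : ℂ) * p.2.1)))
    (∀ p, φ (heisAct u δ 0 p) = φ p) ∧
    (∀ p, φ (heisAct 0 (2 * Real.pi * v) 0 p) = φ p) ∧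
    (∀ p, φ (heisAct 0 0 (2 * Real.pi * (u * v)) p) = φ p) ∧
    (∀ p, chi1 φ p = Complex.I * ((1 / u : ℝ) : ℂ) *
        ((2 * Real.pi * k1 : ℂ) - ((δ / v : ℝ) : ℂ) * k2) * φ p) ∧
    (∀ p, chi2 φ p = Complex.I * ((k2 : ℂ) / (v : ℂ)) * φ p) ∧
    (∀ p, chi3 φ p = 0) := by
  intro φ
  have hu' : (u : ℂ) ≠ 0 := Complex.ofReal_ne_zero.mpr hu
  have hv' : (v : ℂ) ≠ 0 := Complex.ofReal_ne_zero.mpr hv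
  set A : ℂ := (Complex.I / u) * (2 * Real.pi * k1 - (δ : ℂ) * k2 / v) with hA
  set B : ℂ := Complex.I * k2 / v with hB
  have hφ : φ = fun p : ℝ × ℝ × ℝ => Complex.exp (A * p.1 + B * p.2.1) := by
    funext p
    show Complex.exp _ = _
    congr 1
    rw [hA, hB]
    field_simp [hA, hB]
    ring
  have hfd : ∀ p : ℝ × ℝ × ℝ, fderiv ℝ φ p = φ p • expLin A B := by
    intro p
    rw [hφ]
    exact phi_fderiv A B p
  refine ⟨?_, ?_, ?_, ?_, ?_, ?_⟩
  · intro p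
    rw [hφ]
    show Complex.exp (A * ((u : ℝ) + p.1 : ℝ) + B * ((δ : ℝ) + p.2.1 : ℝ)) = _
    push_cast
    have : A * ((u : ℂ) + p.1) + B * ((δ : ℂ) + p.2.1) =
        (A * p.1 + B * p.2.1) + (k1 : ℤ) * (2 * Real.pi * Complex.I) := by
      rw [hA, hB]
      field_simp [hA, hB]
      ring
    rw [this, Complex.exp_add, Complex.exp_int_mul_two_pi_mul_I, mul_one]
  · intro p
    rw [hφ]
    show Complex.exp (A * ((0 : ℝ) + p.1 : ℝ) + B * ((2 * Real.pi * v : ℝ) + p.2.1 : ℝ)) = _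
    push_cast
    have : A * ((0 : ℂ) + p.1) + B * ((2 * Real.pi * v : ℂ) + p.2.1) =
        (A * p.1 + B * p.2.1) + (k2 : ℤ) * (2 * Real.pi * Complex.I) := by
      rw [hA, hB]
      field_simp [hA, hB]
      ring
    rw [this, Complex.exp_add, Complex.exp_int_mul_two_pi_mul_I, mul_one]
  · intro p
    rw [hφ]
    show Complex.exp (A * ((0 : ℝ) + p.1 : ℝ) + B * ((0 : ℝ) + p.2.1 : ℝ)) = _
    norm_num
  · intro p
    rw [chi1, hfd p]
    simp only [ContinuousLinearMap.smul_apply, expLin_apply, smul_eq_mul]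
    push_cast
    rw [hA]
    field_simp
    ring
  · intro p
    rw [chi2, hfd p]
    simp only [ContinuousLinearMap.smul_apply, expLin_apply, smul_eq_mul]
    rw [hB]
    field_simp
    simp only [Complex.ofReal_zero, Complex.ofReal_one]
    ring
  · intro p
    rw [chi3, hfd p]
    simp [expLin_apply]
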